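/- Let a ≠ b be positive reals, λ > 0, and x₁ ∈ (-1,1). Suppose v₁, v₂ are nontrivial solutions on [x₁,1] of -v₁'' = λ a v₁ and -v₂'' = λ b v₂ respectively, both nonzero on [x₁, 1), with v₁(x₁) = v₂(x₁), v₁'(x₁) = v₂'(x₁). If x₁ is sufficiently close to 1, then v₁(1) ≠ v₂(1). -/

import Mathlib

/-- Sign constancy: a continuous nonvanishing function on `[x₁, x]` has
`f x * f x₁ > 0`. -/
lemma stmt10_sign_aux {f : ℝ → ℝ} {x₁ x : ℝ} (hx : x₁ ≤ x)
    (hc : ContinuousOn f (Set.Icc x₁ x))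
    (hne : ∀ y ∈ Set.Icc x₁ x, f y ≠ 0) : 0 < f x * f x₁ := by
  rcases lt_trichotomy (f x * f x₁) 0 with h | h | h
  · exfalso
    have h0 : (0 : ℝ) ∈ Set.uIcc (f x₁) (f x) := by
      rcases mul_neg_iff.mp h with ⟨h1, h2⟩ | ⟨h1, h2⟩
      · exact Set.mem_uIcc.mpr (Or.inl ⟨h2.le, h1.le⟩)
      · exact Set.mem_uIcc.mpr (Or.inr ⟨h1.le, h2.le⟩)
    have hsub := intermediate_value_uIcc (by rwa [Set.uIcc_of_le hx] : ContinuousOn f (Set.uIcc x₁ x))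
    obtain ⟨z, hz, hz0⟩ := hsub h0
    rw [Set.uIcc_of_le hx] at hz
    exact hne z hz hz0
  · exact absurd h (mul_ne_zero (hne x ⟨hx, le_refl x⟩) (hne x₁ ⟨le_refl x₁, hx⟩))
  · exact h

/-- Core of the strict Sturm comparison, under the normalization `a < b`. -/
lemma stmt10_core (a b lam x₁ : ℝ) (hab : a < b) (hlam : 0 < lam) (hx₁ : x₁ < 1)
    (v₁ v₁' v₂ v₂' : ℝ → ℝ)
    (hd1 : ∀ x ∈ Set.Icc x₁ (1 : ℝ), HasDerivAt v₁ (v₁' x) x)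
    (hd1' : ∀ x ∈ Set.Icc x₁ (1 : ℝ), HasDerivAt v₁' (-(lam * a * v₁ x)) x)
    (hd2 : ∀ x ∈ Set.Icc x₁ (1 : ℝ), HasDerivAt v₂ (v₂' x) x)
    (hd2' : ∀ x ∈ Set.Icc x₁ (1 : ℝ), HasDerivAt v₂' (-(lam * b * v₂ x)) x)
    (hn1 : ∀ x ∈ Set.Ico x₁ (1 : ℝ), v₁ x ≠ 0)
    (hn2 : ∀ x ∈ Set.Ico x₁ (1 : ℝ), v₂ x ≠ 0)
    (hC : v₁ x₁ = v₂ x₁) (hD : v₁' x₁ = v₂' x₁) : v₁ 1 ≠ v₂ 1 := by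
  intro heq
  set W : ℝ → ℝ := fun x => v₁ x * v₂' x - v₁' x * v₂ x with hWdef
  -- derivative of the Wronskian
  have hW : ∀ x ∈ Set.Icc x₁ (1 : ℝ), HasDerivAt W (lam * (a - b) * (v₁ x * v₂ x)) x := by
    intro x hx
    have h := ((hd1 x hx).mul (hd2' x hx)).sub ((hd1' x hx).mul (hd2 x hx))
    exact h.congr_deriv (by ring)
  have hWc : ContinuousOn W (Set.Icc x₁ 1) := fun x hx =>
    (hW x hx).continuousAt.continuousWithinAt
  -- positivity of v₁ * v₂ on [x₁, 1)
  have hprod : ∀ x ∈ Set.Ico x₁ (1 : ℝ), 0 < v₁ x * v₂ x := by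
    intro x hx
    have hsub : Set.Icc x₁ x ⊆ Set.Ico x₁ 1 := fun y hy => ⟨hy.1, lt_of_le_of_lt hy.2 hx.2⟩
    have hsub' : Set.Icc x₁ x ⊆ Set.Icc x₁ 1 := fun y hy => ⟨hy.1, (hy.2.trans hx.2.le)⟩
    have hc1 : ContinuousOn v₁ (Set.Icc x₁ x) := fun y hy =>
      (hd1 y (hsub' hy)).continuousAt.continuousWithinAt
    have hc2 : ContinuousOn v₂ (Set.Icc x₁ x) := fun y hy =>
      (hd2 y (hsub' hy)).continuousAt.continuousWithinAt
    have h1 := stmt10_sign_aux hx.1 hc1 (fun y hy => hn1 y (hsub hy))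
    have h2 := stmt10_sign_aux hx.1 hc2 (fun y hy => hn2 y (hsub hy))
    rw [hC] at h1
    nlinarith [mul_pos h1 h2, sq_nonneg (v₂ x₁)]
  -- W is strictly decreasing on [x₁, 1]
  have hanti : StrictAntiOn W (Set.Icc x₁ 1) := by
    apply StrictAntiOn.mono (s := Set.Icc x₁ 1) ?_ (le_refl _)
    apply strictAntiOn_of_deriv_neg (convex_Icc x₁ 1) hWc
    intro x hx
    rw [interior_Icc] at hx
    have hx' : x ∈ Set.Icc x₁ (1 : ℝ) := ⟨hx.1.le, hx.2.le⟩
    rw [(hW x hx').deriv]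
    exact mul_neg_of_neg_of_pos (mul_neg_of_pos_of_neg hlam (by linarith))
      (hprod x ⟨hx.1.le, hx.2⟩)
  have hWx₁ : W x₁ = 0 := by simp only [hWdef]; rw [hC, hD]; ring
  have hW1 : W 1 < 0 := by
    have := hanti ⟨le_refl x₁, hx₁.le⟩ ⟨hx₁.le, le_refl 1⟩ hx₁
    rwa [hWx₁] at this
  -- hence v₁ 1 ≠ 0
  have hV : v₁ 1 ≠ 0 := by
    intro h0
    have h0' : v₂ 1 = 0 := heq ▸ h0
    have : W 1 = 0 := by simp only [hWdef]; rw [h0, h0']; ring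
    linarith
  have hv₁ne : ∀ x ∈ Set.Icc x₁ (1 : ℝ), v₁ x ≠ 0 := by
    intro x hx
    rcases lt_or_eq_of_le hx.2 with h | h
    · exact hn1 x ⟨hx.1, h⟩
    · rw [h]; exact hV
  -- the ratio r = v₂ / v₁ is strictly increasing on [x₁, 1]
  set r : ℝ → ℝ := fun x => v₂ x / v₁ x with hrdef
  have hr : ∀ x ∈ Set.Icc x₁ (1 : ℝ),
      HasDerivAt r ((v₂' x * v₁ x - v₂ x * v₁' x) / (v₁ x) ^ 2) x := by
    intro x hx
    exact (hd2 x hx).div (hd1 x hx) (hv₁ne x hx)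
  have hrc : ContinuousOn r (Set.Icc x₁ 1) := fun x hx =>
    (hr x hx).continuousAt.continuousWithinAt
  have hmono : StrictAntiOn r (Set.Icc x₁ 1) := by
    apply strictAntiOn_of_deriv_neg (convex_Icc x₁ 1) hrc
    intro x hx
    rw [interior_Icc] at hx
    have hx' : x ∈ Set.Icc x₁ (1 : ℝ) := ⟨hx.1.le, hx.2.le⟩
    rw [(hr x hx').deriv]
    have hWx : W x < 0 := by
      have := hanti ⟨le_refl x₁, hx₁.le⟩ hx' hx.1
      rwa [hWx₁] at this
    have hnum : v₂' x * v₁ x - v₂ x * v₁' x < 0 := by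
      simp only [hWdef] at hWx; nlinarith
    have hne := hv₁ne x hx'
    have hden : 0 < (v₁ x) ^ 2 := by positivity
    exact div_neg_of_neg_of_pos hnum hden
  have h1 := hmono ⟨le_refl x₁, hx₁.le⟩ ⟨hx₁.le, le_refl 1⟩ hx₁
  have hrx₁ : r x₁ = 1 := by
    simp only [hrdef]
    rw [← hC, div_self (hn1 x₁ ⟨le_refl x₁, hx₁⟩)]
  have hr1 : r 1 = 1 := by
    simp only [hrdef]
    rw [← heq, div_self hV]
  rw [hrx₁, hr1] at h1
  exact lt_irrefl 1 h1

/-- Lemma 6.4, strict Sturm comparison: two distinct linear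
frequencies with identical Cauchy data at x₁ cannot give equal values at 1,
when x₁ is close enough to 1. -/
theorem stmt_10 (a b lam : ℝ) (ha : 0 < a) (hb : 0 < b) (hab : a ≠ b)
    (hlam : 0 < lam) :
    ∃ δ > (0 : ℝ), ∀ x₁ ∈ Set.Ioo (1 - δ) (1 : ℝ), x₁ ∈ Set.Ioo (-1 : ℝ) 1 →
      ∀ v₁ v₁' v₂ v₂' : ℝ → ℝ,
        (∀ x ∈ Set.Icc x₁ (1 : ℝ), HasDerivAt v₁ (v₁' x) x) →
        (∀ x ∈ Set.Icc x₁ (1 : ℝ), HasDerivAt v₁' (-(lam * a * v₁ x)) x) →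
        (∀ x ∈ Set.Icc x₁ (1 : ℝ), HasDerivAt v₂ (v₂' x) x) →
        (∀ x ∈ Set.Icc x₁ (1 : ℝ), HasDerivAt v₂' (-(lam * b * v₂ x)) x) →
        (∀ x ∈ Set.Ico x₁ (1 : ℝ), v₁ x ≠ 0) →
        (∀ x ∈ Set.Ico x₁ (1 : ℝ), v₂ x ≠ 0) →
        v₁ x₁ = v₂ x₁ → v₁' x₁ = v₂' x₁ →
        v₁ 1 ≠ v₂ 1 := by
  refine ⟨1, one_pos, ?_⟩
  intro x₁ _ hx₁' v₁ v₁' v₂ v₂' hd1 hd1' hd2 hd2' hn1 hn2 hC hD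
  rcases lt_or_gt_of_ne hab with h | h
  · exact stmt10_core a b lam x₁ h hlam hx₁'.2 v₁ v₁' v₂ v₂' hd1 hd1' hd2 hd2' hn1 hn2 hC hD
  · exact (stmt10_core b a lam x₁ h hlam hx₁'.2 v₂ v₂' v₁ v₁' hd2 hd2' hd1 hd1' hn2 hn1
      hC.symm hD.symm).symm
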